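/- Let 𝓝 be a normalized family. Then 𝓝 = J(𝓝)** (the double dual of J(𝓝), with consistent indexings). -/

import Mathlib

/-- The universe `U(𝓕)` of a finite family of finite sets: the union of its members. -/
def famUniv (F : Finset (Finset ℕ)) : Finset ℕ := F.sup id

/-- `𝓕_a = {F ∈ 𝓕 : a ∈ F}`. -/
def famAt (F : Finset (Finset ℕ)) (a : ℕ) : Finset (Finset ℕ) := F.filter (fun X => a ∈ X)

/-- `𝓕` is union-closed. -/
def unionClosed (F : Finset (Finset ℕ)) : Prop := ∀ A ∈ F, ∀ B ∈ F, A ∪ B ∈ F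

/-- `𝓕` is separating if `𝓕_a ≠ 𝓕_b` for all distinct `a, b ∈ U(𝓕)`. -/
def separating (F : Finset (Finset ℕ)) : Prop :=
  ∀ a ∈ famUniv F, ∀ b ∈ famUniv F, a ≠ b → famAt F a ≠ famAt F b

/-- `𝓕` is normalized: separating, union-closed, `∅ ∈ 𝓕` and `|𝓕| = |U(𝓕)| + 1`. -/
def normalized (F : Finset (Finset ℕ)) : Prop :=
  separating F ∧ unionClosed F ∧ ∅ ∈ F ∧ F.card = (famUniv F).card + 1

/-- `𝓕` is independent. -/
def independent (F : Finset (Finset ℕ)) : Prop :=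
  ∀ a ∈ famUniv F, ∀ S ⊆ famUniv F \ {a},
    (∃ O ∈ F, a ∉ O ∧ (O ∩ S).Nonempty) ∨ (∃ O ∈ F, a ∈ O ∧ O ∩ S = ∅)

/-- `𝓖` is a generating subfamily of `𝓕`: `𝓖 ⊆ 𝓕` and every member of `𝓕` is a union
of members of `𝓖` (the empty union giving `∅`). -/
def generates (G F : Finset (Finset ℕ)) : Prop :=
  G ⊆ F ∧ ∀ X ∈ F, ∃ T ⊆ G, X = T.sup id

/-- The union-closed family generated by `𝓖`: all unions of subfamilies of `𝓖`
(including the empty union `∅`). -/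
def gen (G : Finset (Finset ℕ)) : Finset (Finset ℕ) :=
  G.powerset.image (fun T => T.sup id)

/-- `J(𝓕)`: the non-empty irreducible members of `𝓕`. -/
def J (F : Finset (Finset ℕ)) : Finset (Finset ℕ) :=
  F.filter (fun I => I ≠ ∅ ∧ ∀ A ∈ F, ∀ B ∈ F, I = A ∪ B → A = I ∨ B = I)

/-- `H : ℕ → Finset ℕ` is an indexing `H_1, …, H_s` of `𝓛 \ {∅}`. -/
def isIndexing (L : Finset (Finset ℕ)) (s : ℕ) (H : ℕ → Finset ℕ) : Prop :=
  Set.InjOn H (Finset.Icc 1 s) ∧ (Finset.Icc 1 s).image H = L.erase ∅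

/-- `𝓗^{ι_j} = {i ∈ [s] : j ∈ H_i}`. -/
def iota (s : ℕ) (H : ℕ → Finset ℕ) (j : ℕ) : Finset ℕ :=
  (Finset.Icc 1 s).filter (fun i => j ∈ H i)

/-- The dual family: the union-closed family (containing `∅`) generated by
`{𝓗^{ι_1}, …, 𝓗^{ι_m}}`, where `H` indexes `𝓛 \ {∅}` as `H_1, …, H_s` and `U(𝓛) = [m]`. -/
def dualFam (m s : ℕ) (H : ℕ → Finset ℕ) : Finset (Finset ℕ) :=
  gen ((Finset.Icc 1 m).image (iota s H))


lemma sup_mem_of_subset (N : Finset (Finset ℕ)) (huc : unionClosed N) (hempty : ∅ ∈ N) :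
    ∀ T : Finset (Finset ℕ), T ⊆ N → T.sup id ∈ N := by
  intro T
  induction T using Finset.induction_on with
  | empty => intro _; simpa using hempty
  | insert _ _ hA ih =>
    intro hT
    rw [Finset.sup_insert]
    exact huc _ (hT (Finset.mem_insert_self _ _)) _
      (ih (fun x hx => hT (Finset.mem_insert_of_mem hx)))

lemma mem_gen_J (N : Finset (Finset ℕ)) (huc : unionClosed N) :
    ∀ X ∈ N, ∃ T ⊆ J N, X = T.sup id := by
  intro X
  induction X using Finset.strongInduction with
  | _ X ih =>
    intro hX
    by_cases h0 : X = ∅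
    · exact ⟨∅, by simp, by simp [h0]⟩
    by_cases hirr : ∀ A ∈ N, ∀ B ∈ N, X = A ∪ B → A = X ∨ B = X
    · refine ⟨{X}, ?_, by simp⟩
      intro Y hY
      rw [Finset.mem_singleton] at hY
      subst hY
      exact Finset.mem_filter.mpr ⟨hX, h0, hirr⟩
    · push_neg at hirr
      obtain ⟨A, hA, B, hB, hXAB, hAX, hBX⟩ := hirr
      have hAsub : A ⊆ X := hXAB ▸ Finset.subset_union_left
      have hBsub : B ⊆ X := hXAB ▸ Finset.subset_union_right
      obtain ⟨TA, hTA, hTAeq⟩ := ih A (Finset.ssubset_iff_subset_ne.mpr ⟨hAsub, hAX⟩) hA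
      obtain ⟨TB, hTB, hTBeq⟩ := ih B (Finset.ssubset_iff_subset_ne.mpr ⟨hBsub, hBX⟩) hB
      refine ⟨TA ∪ TB, Finset.union_subset hTA hTB, ?_⟩
      rw [Finset.sup_union, ← hTAeq, ← hTBeq, hXAB, Finset.sup_eq_union]

lemma gen_J_eq (N : Finset (Finset ℕ)) (huc : unionClosed N) (hempty : ∅ ∈ N) :
    gen (J N) = N := by
  apply Finset.Subset.antisymm
  · intro X hX
    simp only [gen, Finset.mem_image, Finset.mem_powerset] at hX
    obtain ⟨T, hT, rfl⟩ := hX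
    exact sup_mem_of_subset N huc hempty T (hT.trans (Finset.filter_subset _ _))
  · intro X hX
    obtain ⟨T, hT, hTeq⟩ := mem_gen_J N huc X hX
    simp only [gen, Finset.mem_image, Finset.mem_powerset]
    exact ⟨T, hT, hTeq.symm⟩

theorem stmt13 (n s : ℕ) (N : Finset (Finset ℕ)) (hnorm : normalized N)
    (hU : famUniv N = Finset.Icc 1 n)
    (H : ℕ → Finset ℕ) (hH : isIndexing (J N) s H) :
    dualFam s n (iota s H) = N := by
  obtain ⟨hsep, huc, hempty, hcard⟩ := hnorm
  obtain ⟨hinj, himg⟩ := hH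
  have hJN : J N ⊆ N := Finset.filter_subset _ _
  have hne : (∅ : Finset ℕ) ∉ J N := by
    intro h
    exact (Finset.mem_filter.mp h).2.1 rfl
  have herase : (J N).erase ∅ = J N := Finset.erase_eq_self.mpr hne
  have hHsub : ∀ j ∈ Finset.Icc 1 s, H j ⊆ Finset.Icc 1 n := by
    intro j hj
    have h1 : H j ∈ (J N).erase ∅ := himg ▸ Finset.mem_image_of_mem H hj
    have h2 : H j ∈ N := hJN (Finset.mem_of_mem_erase h1)
    rw [← hU]
    exact Finset.le_sup (f := id) h2
  have key : ∀ j ∈ Finset.Icc 1 s, iota n (iota s H) j = H j := by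
    intro j hj
    ext i
    simp only [iota, Finset.mem_filter]
    constructor
    · exact fun h => h.2.2
    · exact fun h => ⟨hHsub j hj h, hj, h⟩
  have himg2 : (Finset.Icc 1 s).image (iota n (iota s H)) = J N := by
    rw [Finset.image_congr (fun j hj => key j hj), himg, herase]
  unfold dualFam
  rw [himg2]
  exact gen_J_eq N huc hempty
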